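/- Let H be a complex Hilbert space and let A, B be bounded linear operators on H. Let T be the bounded operator on H × H given by T(u, v) = (A u − B v, 0), and let P be the orthogonal projection of H × H onto the kernel of T. Define bounded operators on H by X u := (P(u, 0)).1 and Y v := (P(0, v)).2. Then the range of √(A ∘ X ∘ A*) is contained in (range A) ∩ (range B), and the range of √(B ∘ Y ∘ B*) is contained in (range A) ∩ (range B), where √ denotes the positive square root of a positive operator (A ∘ X ∘ A* and B ∘ Y ∘ B* are positive since X and Y are positive). -/

import Mathlib

set_option synthInstance.maxHeartbeats 400000
set_option maxHeartbeats 1000000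

open ContinuousLinearMap

variable {H : Type*} [NormedAddCommGroup H] [InnerProductSpace ℂ H] [CompleteSpace H]

/-- The orthogonal projection of the Hilbert space `H × H` (with the product, i.e. `L²`,
inner product) onto the kernel of `T`, regarded as a bounded operator. -/
noncomputable def kerProj (T : WithLp 2 (H × H) →L[ℂ] WithLp 2 (H × H)) :
    WithLp 2 (H × H) →L[ℂ] WithLp 2 (H × H) :=
  haveI : CompleteSpace (LinearMap.ker (T : WithLp 2 (H × H) →ₗ[ℂ] WithLp 2 (H × H))) := T.isClosed_ker.completeSpace_coe
  (LinearMap.ker (T : WithLp 2 (H × H) →ₗ[ℂ] WithLp 2 (H × H))).subtypeL ∘L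
    Submodule.orthogonalProjectionOnto (LinearMap.ker (T : WithLp 2 (H × H) →ₗ[ℂ] WithLp 2 (H × H)))


/-- If `S` is a bounded operator between complex Hilbert spaces, then the range of
`√(S S*)` is contained in the range of `S`. -/
lemma range_sqrt_comp_adjoint_le {E F : Type*}
    [NormedAddCommGroup E] [InnerProductSpace ℂ E] [CompleteSpace E]
    [NormedAddCommGroup F] [InnerProductSpace ℂ F] [CompleteSpace F]
    (S : F →L[ℂ] E) :
    LinearMap.range ((CFC.sqrt (S ∘L adjoint S) : E →L[ℂ] E) : E →ₗ[ℂ] E) ≤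
      LinearMap.range (S : F →ₗ[ℂ] E) := by
  have hpos : (0 : E →L[ℂ] E) ≤ S ∘L adjoint S := by
    rw [ContinuousLinearMap.nonneg_iff_isPositive]
    simpa using! (ContinuousLinearMap.isPositive_one (E := F)).conj_adjoint S
  set R := CFC.sqrt (S ∘L adjoint S) with hRdef
  have hRnn : (0 : E →L[ℂ] E) ≤ R := CFC.sqrt_nonneg _
  have hRsa : IsSelfAdjoint R :=
    ((ContinuousLinearMap.nonneg_iff_isPositive R).mp hRnn).isSelfAdjoint
  have hR2 : R ∘L R = S ∘L adjoint S := CFC.sqrt_mul_sqrt_self _ hpos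
  have hnorm : ∀ x : E, ‖R x‖ = ‖adjoint S x‖ := by
    intro x
    have h1 : (inner ℂ (R x) (R x) : ℂ) = inner ℂ (adjoint S x) (adjoint S x) := by
      calc (inner ℂ (R x) (R x) : ℂ) = inner ℂ x (R (R x)) := hRsa.isSymmetric x (R x)
        _ = inner ℂ x (S (adjoint S x)) := by
            have h2 := DFunLike.congr_fun hR2 x
            simp only [ContinuousLinearMap.comp_apply] at h2
            rw [h2]
        _ = inner ℂ (adjoint S x) (adjoint S x) := (adjoint_inner_left S (adjoint S x) x).symm
    rw [@norm_eq_sqrt_re_inner ℂ, @norm_eq_sqrt_re_inner ℂ, h1]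
  have hker : ∀ x : E, adjoint S x = 0 → R x = 0 := by
    intro x hx
    have := hnorm x
    rw [hx, norm_zero, norm_eq_zero] at this
    exact this
  classical
  set Sl := ((adjoint S) : E →ₗ[ℂ] F) with hSl
  have hker' : LinearMap.ker Sl ≤ LinearMap.ker (R : E →ₗ[ℂ] E) := fun x hx => hker x hx
  set f₀ : LinearMap.range Sl →ₗ[ℂ] E :=
    (Submodule.liftQ _ (R : E →ₗ[ℂ] E) hker') ∘ₗ (Sl.quotKerEquivRange.symm : _ →ₗ[ℂ] _)
    with hf₀def
  have hf₀ : ∀ (x : E) (h : Sl x ∈ LinearMap.range Sl), f₀ ⟨Sl x, h⟩ = R x := by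
    intro x h
    have h1 : Sl.quotKerEquivRange.symm ⟨Sl x, h⟩ = (LinearMap.ker Sl).mkQ x :=
      Sl.quotKerEquivRange_symm_apply_image x h
    simp [hf₀def, h1]
  have hf₀norm : ∀ y : LinearMap.range Sl, ‖f₀ y‖ ≤ 1 * ‖(y : F)‖ := by
    rintro ⟨y, x, rfl⟩
    rw [hf₀ x ⟨x, rfl⟩, one_mul]
    exact le_of_eq (hnorm x)
  set f : LinearMap.range Sl →L[ℂ] E := LinearMap.mkContinuous f₀ 1 hf₀norm with hfdef
  set K := (LinearMap.range Sl).topologicalClosure with hKdef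
  set e : LinearMap.range Sl →L[ℂ] K :=
    { toLinearMap := Submodule.inclusion (Submodule.le_topologicalClosure _)
      cont := continuous_induced_rng.2 continuous_subtype_val } with hedef
  have he_iso : Isometry e := fun a b => rfl
  have h_dense : DenseRange e := by
    intro k
    have hk : (k : F) ∈ closure ((LinearMap.range Sl : Submodule ℂ F) : Set F) := by
      rw [← Submodule.topologicalClosure_coe]; exact k.2
    rcases mem_closure_iff_seq_limit.mp hk with ⟨y, hy, hlim⟩
    refine mem_closure_iff_seq_limit.mpr ⟨fun n => e ⟨y n, hy n⟩, fun n => ⟨_, rfl⟩, ?_⟩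
    exact Topology.IsEmbedding.subtypeVal.tendsto_nhds_iff.mpr hlim
  have h_ui : IsUniformInducing e := he_iso.isUniformInducing
  set U₁ : K →L[ℂ] E := f.extend e with hU₁def
  set U : F →L[ℂ] E := U₁ ∘L K.orthogonalProjectionOnto with hUdef
  have hUS : U ∘L adjoint S = R := by
    ext x
    have hmem : adjoint S x ∈ K :=
      Submodule.le_topologicalClosure _ (LinearMap.mem_range_self Sl x)
    have h1 : K.orthogonalProjectionOnto (adjoint S x) = ⟨adjoint S x, hmem⟩ :=
      Subtype.ext (K.starProjection_eq_self_iff.mpr hmem)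
    have h2 : (⟨adjoint S x, hmem⟩ : K) = e ⟨Sl x, LinearMap.mem_range_self Sl x⟩ := rfl
    show U₁ (K.orthogonalProjectionOnto (adjoint S x)) = R x
    rw [h1, h2, hU₁def, ContinuousLinearMap.extend_eq (f := f) (e := e) h_dense h_ui]
    exact hf₀ x _
  have hfact : S ∘L adjoint U = R := by
    have h := congrArg ContinuousLinearMap.adjoint hUS
    rwa [ContinuousLinearMap.adjoint_comp, ContinuousLinearMap.adjoint_adjoint,
      hRsa.adjoint_eq] at h
  rintro y ⟨x, rfl⟩
  exact ⟨adjoint U x, by rw [← hfact]; rfl⟩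

/-- Lemma 3.9 (square-root range inclusions): with `T(u,v) = (Au - Bv, 0)` on `H × H`,
`P` the orthogonal projection onto `ker T`, `X u = (P(u,0)).1` and `Y v = (P(0,v)).2`,
one has `range √(A X A*) ⊆ range A ∩ range B` and
`range √(B Y B*) ⊆ range A ∩ range B`. -/
theorem stmt13 (A B : H →L[ℂ] H)
    (T : WithLp 2 (H × H) →L[ℂ] WithLp 2 (H × H))
    (hT : ∀ u v : H, T ((WithLp.equiv 2 (H × H)).symm (u, v)) =
      (WithLp.equiv 2 (H × H)).symm (A u - B v, 0))
    (X Y : H →L[ℂ] H)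
    (hX : ∀ u : H,
      X u = (WithLp.equiv 2 (H × H) (kerProj T ((WithLp.equiv 2 (H × H)).symm (u, 0)))).1)
    (hY : ∀ v : H,
      Y v = (WithLp.equiv 2 (H × H) (kerProj T ((WithLp.equiv 2 (H × H)).symm (0, v)))).2) :
    LinearMap.range ((CFC.sqrt (A ∘L X ∘L adjoint A) : H →L[ℂ] H) : H →ₗ[ℂ] H) ≤
      LinearMap.range (A : H →ₗ[ℂ] H) ⊓ LinearMap.range (B : H →ₗ[ℂ] H) ∧
    LinearMap.range ((CFC.sqrt (B ∘L Y ∘L adjoint B) : H →L[ℂ] H) : H →ₗ[ℂ] H) ≤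
      LinearMap.range (A : H →ₗ[ℂ] H) ⊓ LinearMap.range (B : H →ₗ[ℂ] H) := by
  haveI : CompleteSpace (LinearMap.ker (T : WithLp 2 (H × H) →ₗ[ℂ] WithLp 2 (H × H))) := T.isClosed_ker.completeSpace_coe
  set eqv := WithLp.prodContinuousLinearEquiv 2 ℂ H H with heqv
  set K1 : WithLp 2 (H × H) →L[ℂ] H :=
    (ContinuousLinearMap.fst ℂ H H) ∘L (eqv : WithLp 2 (H × H) →L[ℂ] H × H) with hK1
  set K2 : WithLp 2 (H × H) →L[ℂ] H :=
    (ContinuousLinearMap.snd ℂ H H) ∘L (eqv : WithLp 2 (H × H) →L[ℂ] H × H) with hK2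
  set J1 : H →L[ℂ] WithLp 2 (H × H) :=
    (eqv.symm : H × H →L[ℂ] WithLp 2 (H × H)) ∘L ContinuousLinearMap.inl ℂ H H with hJ1
  set J2 : H →L[ℂ] WithLp 2 (H × H) :=
    (eqv.symm : H × H →L[ℂ] WithLp 2 (H × H)) ∘L ContinuousLinearMap.inr ℂ H H with hJ2
  have hadj1 : adjoint K1 = J1 := by
    symm
    rw [eq_adjoint_iff]
    intro x y
    simp [hJ1, hK1, heqv, WithLp.prod_inner_apply, WithLp.prodContinuousLinearEquiv_apply, WithLp.prodContinuousLinearEquiv_symm_apply, WithLp.equiv_apply, WithLp.equiv_symm_apply]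
  have hadj2 : adjoint K2 = J2 := by
    symm
    rw [eq_adjoint_iff]
    intro x y
    simp [hJ2, hK2, heqv, WithLp.prod_inner_apply, WithLp.prodContinuousLinearEquiv_apply, WithLp.prodContinuousLinearEquiv_symm_apply, WithLp.equiv_apply, WithLp.equiv_symm_apply]
  set P := kerProj T with hP
  have hPsa : IsSelfAdjoint P := isSelfAdjoint_starProjection (LinearMap.ker (T : WithLp 2 (H × H) →ₗ[ℂ] WithLp 2 (H × H)))
  have hPP : ∀ w, P (P w) = P w := by
    intro w
    show ((LinearMap.ker (T : WithLp 2 (H × H) →ₗ[ℂ] WithLp 2 (H × H))).subtypeL ∘L Submodule.orthogonalProjectionOnto (LinearMap.ker (T : WithLp 2 (H × H) →ₗ[ℂ] WithLp 2 (H × H)))) (P w) = P w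
    simp [hP, kerProj, Submodule.orthogonalProjectionOnto_mem_subspace_eq_self, Submodule.starProjection_eq_self_iff]
  have hPker : ∀ w, T (P w) = 0 := by
    intro w
    have : P w ∈ (LinearMap.ker (T : WithLp 2 (H × H) →ₗ[ℂ] WithLp 2 (H × H))) := (Submodule.orthogonalProjectionOnto (LinearMap.ker (T : WithLp 2 (H × H) →ₗ[ℂ] WithLp 2 (H × H))) w).2
    exact this
  -- the key range computation, done for both operators at once
  have hrange : ∀ w : WithLp 2 (H × H),
      A (WithLp.equiv 2 (H × H) (P w)).1 ∈ LinearMap.range (A : H →ₗ[ℂ] H) ⊓ LinearMap.range (B : H →ₗ[ℂ] H) ∧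
      A (WithLp.equiv 2 (H × H) (P w)).1 = B (WithLp.equiv 2 (H × H) (P w)).2 := by
    intro w
    set p := WithLp.equiv 2 (H × H) (P w) with hp
    have hw : (WithLp.equiv 2 (H × H)).symm (p.1, p.2) = P w := by
      rw [Prod.mk.eta, hp]
      exact (WithLp.equiv 2 (H × H)).symm_apply_apply (P w)
    have h := hT p.1 p.2
    rw [hw, hPker w] at h
    have h0 : ((A p.1 - B p.2 : H), (0 : H)) = 0 := by
      have := congrArg (WithLp.equiv 2 (H × H)) h.symm
      simpa using this
    have hAB : A p.1 = B p.2 := by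
      have := congrArg Prod.fst h0
      simpa [sub_eq_zero] using this
    exact ⟨Submodule.mem_inf.mpr ⟨⟨p.1, rfl⟩, ⟨p.2, hAB.symm⟩⟩, hAB⟩
  constructor
  · set S₁ : WithLp 2 (H × H) →L[ℂ] H := (A ∘L K1) ∘L P with hS₁
    have hX' : A ∘L X ∘L adjoint A = S₁ ∘L adjoint S₁ := by
      have h1 : adjoint S₁ = P ∘L (J1 ∘L adjoint A) := by
        rw [hS₁, adjoint_comp, adjoint_comp, hPsa.adjoint_eq, hadj1]
      ext x
      rw [h1, hS₁]
      simp only [ContinuousLinearMap.comp_apply, h1]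
      rw [hPP]
      have hXapp : X (adjoint A x) = K1 (P (J1 (adjoint A x))) := by
        rw [hX (adjoint A x)]
        simp [hK1, hJ1, heqv, WithLp.prod_inner_apply, WithLp.prodContinuousLinearEquiv_apply, WithLp.prodContinuousLinearEquiv_symm_apply, WithLp.equiv_apply, WithLp.equiv_symm_apply]
      simp [hXapp]
    rw [hX']
    refine le_trans (range_sqrt_comp_adjoint_le S₁) ?_
    rintro y ⟨w, rfl⟩
    have : S₁ w = A (WithLp.equiv 2 (H × H) (P w)).1 := by
      simp [hS₁, hK1, heqv, WithLp.prod_inner_apply, WithLp.prodContinuousLinearEquiv_apply, WithLp.prodContinuousLinearEquiv_symm_apply, WithLp.equiv_apply, WithLp.equiv_symm_apply]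
    rw [ContinuousLinearMap.coe_coe, this]
    exact (hrange w).1
  · set S₂ : WithLp 2 (H × H) →L[ℂ] H := (B ∘L K2) ∘L P with hS₂
    have hY' : B ∘L Y ∘L adjoint B = S₂ ∘L adjoint S₂ := by
      have h1 : adjoint S₂ = P ∘L (J2 ∘L adjoint B) := by
        rw [hS₂, adjoint_comp, adjoint_comp, hPsa.adjoint_eq, hadj2]
      ext x
      rw [h1, hS₂]
      simp only [ContinuousLinearMap.comp_apply, h1]
      rw [hPP]
      have hYapp : Y (adjoint B x) = K2 (P (J2 (adjoint B x))) := by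
        rw [hY (adjoint B x)]
        simp [hK2, hJ2, heqv, WithLp.prod_inner_apply, WithLp.prodContinuousLinearEquiv_apply, WithLp.prodContinuousLinearEquiv_symm_apply, WithLp.equiv_apply, WithLp.equiv_symm_apply]
      simp [hYapp]
    rw [hY']
    refine le_trans (range_sqrt_comp_adjoint_le S₂) ?_
    rintro y ⟨w, rfl⟩
    have h2 : S₂ w = B (WithLp.equiv 2 (H × H) (P w)).2 := by
      simp [hS₂, hK2, heqv, WithLp.prod_inner_apply, WithLp.prodContinuousLinearEquiv_apply, WithLp.prodContinuousLinearEquiv_symm_apply, WithLp.equiv_apply, WithLp.equiv_symm_apply]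
    rw [ContinuousLinearMap.coe_coe, h2, ← (hrange w).2]
    exact (hrange w).1
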